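/- Let G, H, K be finite simple graphs. Suppose p(x,y|v,w) is a synchronous vectorial correlation with inputs V(G) and outputs V(H) satisfying p(x,y|v,w) = 0 whenever (v,w) ∈ E(G) and (x,y) ∉ E(H), and q(a,b|x,y) is a synchronous vectorial correlation with inputs V(H) and outputs V(K) satisfying q(a,b|x,y) = 0 whenever (x,y) ∈ E(H) and (a,b) ∉ E(K). Then r(a,b|v,w) := Σ_{x,y} q(a,b|x,y) p(x,y|v,w) is a synchronous vectorial correlation with inputs V(G) and outputs V(K) satisfying r(a,b|v,w) = 0 whenever (v,w) ∈ E(G) and (a,b) ∉ E(K). In particular, if there exist winning vectorial strategies for the homomorphism games from G to H and from H to K, then there exists one from G to K. -/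

import Mathlib

open scoped InnerProductSpace
open scoped ComplexOrder
open Matrix

/-- A realization of a family `p(x,y|v,w)` (inputs in `I`, outputs in `O`) as a
vectorial correlation. -/
structure VectRealization {I O : Type} [Fintype O] (p : O → O → I → I → ℝ) where
  H : Type
  [nacg : NormedAddCommGroup H]
  [ips : InnerProductSpace ℂ H]
  [cs : CompleteSpace H]
  X : I → O → H
  Y : I → O → H
  orthX : ∀ v : I, ∀ x y : O, x ≠ y → ⟪X v x, X v y⟫_ℂ = 0
  orthY : ∀ w : I, ∀ x y : O, x ≠ y → ⟪Y w x, Y w y⟫_ℂ = 0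
  sumEq : ∀ v w : I, ∑ x, X v x = ∑ y, Y w y
  normOne : ∀ v : I, ‖∑ x, X v x‖ = 1
  nonneg : ∀ v w : I, ∀ x y : O, 0 ≤ p x y v w
  eq : ∀ (x y : O) (v w : I), (p x y v w : ℂ) = ⟪X v x, Y w y⟫_ℂ

/-- `p` is a vectorial correlation if it admits a vectorial realization. -/
def IsVectCorrelation {I O : Type} [Fintype O] (p : O → O → I → I → ℝ) : Prop :=
  Nonempty (VectRealization p)

/-- `p` is synchronous: `p(x,y|v,v) = 0` for all `v` and all `x ≠ y`. -/
def Synchronous {I O : Type} (p : O → O → I → I → ℝ) : Prop :=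
  ∀ (v : I) (x y : O), x ≠ y → p x y v v = 0

/-- The winning condition for the graph homomorphism game from `G` to `H`:
`p(x,y|v,w) = 0` whenever `(v,w) ∈ E(G)` and `(x,y) ∉ E(H)`. -/
def WinningFor {VG VH : Type} (G : SimpleGraph VG) (Hg : SimpleGraph VH)
    (p : VH → VH → VG → VG → ℝ) : Prop :=
  ∀ (v w : VG) (x y : VH), G.Adj v w → ¬ Hg.Adj x y → p x y v w = 0

private lemma psd_eq_conjTranspose_mul_self' {n : Type} [Fintype n] [DecidableEq n]
    {A : Matrix n n ℂ} (h : A.PosSemidef) : ∃ B : Matrix n n ℂ, A = Bᴴ * B := by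
  open MatrixOrder in
  obtain ⟨B, hB⟩ := CStarAlgebra.nonneg_iff_eq_star_mul_self.mp h.nonneg
  exact ⟨B, hB⟩

private lemma gram_factor {ι : Type} [Fintype ι] [DecidableEq ι]
    {E : Type} [NormedAddCommGroup E] [InnerProductSpace ℂ E]
    (z : ι → E) :
    ∃ N : Matrix ι ι ℂ, ∀ s t, ⟪z s, z t⟫_ℂ = ∑ k, (starRingEnd ℂ) (N k s) * N k t := by
  have hpsd : (Matrix.of fun s t => ⟪z s, z t⟫_ℂ).PosSemidef := by
    refine Matrix.posSemidef_iff_dotProduct_mulVec.mpr ⟨?_, ?_⟩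
    · ext s t
      simp [Matrix.conjTranspose_apply, inner_conj_symm]
    · intro c
      have h1 : dotProduct (star c) ((Matrix.of fun s t => ⟪z s, z t⟫_ℂ) *ᵥ c)
          = ⟪∑ s, c s • z s, ∑ s, c s • z s⟫_ℂ := by
        simp only [dotProduct, Matrix.mulVec, Pi.star_apply, Matrix.of_apply,
          inner_sum, sum_inner, inner_smul_left, inner_smul_right, Finset.mul_sum]
        rw [Finset.sum_comm]
        refine Finset.sum_congr rfl fun s _ => Finset.sum_congr rfl fun t _ => by simp only [starRingEnd_apply]; ring
      rw [h1]
      rw [show ⟪∑ s, c s • z s, ∑ s, c s • z s⟫_ℂ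
          = ((‖∑ s, c s • z s‖ ^ 2 : ℝ) : ℂ) from by
        rw [inner_self_eq_norm_sq_to_K]; push_cast; rfl]
      exact Complex.zero_le_real.mpr (sq_nonneg _)
  obtain ⟨N, hN⟩ := psd_eq_conjTranspose_mul_self' hpsd
  refine ⟨N, fun s t => ?_⟩
  have := congrFun (congrFun hN s) t
  simpa [Matrix.mul_apply, Matrix.conjTranspose_apply] using this

private lemma quad_nonneg {ι VH : Type} [Fintype ι] [DecidableEq ι] [Fintype VH] [DecidableEq VH]
    {E1 E2 : Type} [NormedAddCommGroup E1] [InnerProductSpace ℂ E1]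
    [NormedAddCommGroup E2] [InnerProductSpace ℂ E2]
    (z1 : ι → VH → E1) (z2 : ι → VH → E2) (c : ι → ℂ) :
    0 ≤ ∑ s, ∑ t, (starRingEnd ℂ) (c s) * c t *
        (∑ x, ∑ y, ⟪z1 s x, z1 t y⟫_ℂ * ⟪z2 s x, z2 t y⟫_ℂ) := by
  obtain ⟨N, hN⟩ := gram_factor (fun j : ι × VH => z2 j.1 j.2)
  set u : ι × VH → E1 := fun k => ∑ j : ι × VH, (c j.1 * N k j) • z1 j.1 j.2 with hu
  have key : ∑ s, ∑ t, (starRingEnd ℂ) (c s) * c t *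
        (∑ x, ∑ y, ⟪z1 s x, z1 t y⟫_ℂ * ⟪z2 s x, z2 t y⟫_ℂ)
      = ∑ k, ⟪u k, u k⟫_ℂ := by
    calc ∑ s, ∑ t, (starRingEnd ℂ) (c s) * c t *
          (∑ x, ∑ y, ⟪z1 s x, z1 t y⟫_ℂ * ⟪z2 s x, z2 t y⟫_ℂ)
        = ∑ s, ∑ t, ∑ x, ∑ y, (starRingEnd ℂ) (c s) * c t *
            (⟪z1 s x, z1 t y⟫_ℂ * ⟪z2 s x, z2 t y⟫_ℂ) := by
          simp only [Finset.mul_sum]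
      _ = ∑ s, ∑ x, ∑ t, ∑ y, (starRingEnd ℂ) (c s) * c t *
            (⟪z1 s x, z1 t y⟫_ℂ * ⟪z2 s x, z2 t y⟫_ℂ) :=
          Finset.sum_congr rfl fun s _ => Finset.sum_comm
      _ = ∑ i : ι × VH, ∑ j : ι × VH, (starRingEnd ℂ) (c i.1) * c j.1 *
            (⟪z1 i.1 i.2, z1 j.1 j.2⟫_ℂ * ⟪z2 i.1 i.2, z2 j.1 j.2⟫_ℂ) := by
          simp only [Fintype.sum_prod_type]
      _ = ∑ i : ι × VH, ∑ j : ι × VH, ∑ k, ((starRingEnd ℂ) (c i.1) * c j.1 *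
            ⟪z1 i.1 i.2, z1 j.1 j.2⟫_ℂ) * ((starRingEnd ℂ) (N k i) * N k j) := by
          refine Finset.sum_congr rfl fun i _ => Finset.sum_congr rfl fun j _ => ?_
          rw [hN i j]
          simp only [Finset.mul_sum]
          exact Finset.sum_congr rfl fun k _ => by ring
      _ = ∑ i : ι × VH, ∑ k, ∑ j : ι × VH, ((starRingEnd ℂ) (c i.1) * c j.1 *
            ⟪z1 i.1 i.2, z1 j.1 j.2⟫_ℂ) * ((starRingEnd ℂ) (N k i) * N k j) :=
          Finset.sum_congr rfl fun i _ => Finset.sum_comm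
      _ = ∑ k, ∑ i : ι × VH, ∑ j : ι × VH, ((starRingEnd ℂ) (c i.1) * c j.1 *
            ⟪z1 i.1 i.2, z1 j.1 j.2⟫_ℂ) * ((starRingEnd ℂ) (N k i) * N k j) :=
          Finset.sum_comm
      _ = ∑ k, ⟪u k, u k⟫_ℂ := by
          refine Finset.sum_congr rfl fun k _ => ?_
          rw [hu]
          simp only [sum_inner, inner_sum, inner_smul_left, inner_smul_right, _root_.map_mul,
            Finset.mul_sum]
          rw [Finset.sum_comm]
          exact Finset.sum_congr rfl fun a _ => Finset.sum_congr rfl fun b _ => by ring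
  rw [key]
  refine Finset.sum_nonneg fun k _ => ?_
  rw [show ⟪u k, u k⟫_ℂ = ((‖u k‖ ^ 2 : ℝ) : ℂ) from by
    rw [inner_self_eq_norm_sq_to_K]; push_cast; rfl]
  exact Complex.zero_le_real.mpr (sq_nonneg _)

private lemma sum_sum_eq {VH VK : Type} [Fintype VH] [Fintype VK]
    {E1 E2 : Type} [NormedAddCommGroup E1] [InnerProductSpace ℂ E1]
    [NormedAddCommGroup E2] [InnerProductSpace ℂ E2]
    (P Q : VH → E1) (A B : VH → VK → E2) (e : E2)
    (hA : ∀ x, ∑ a, A x a = e) (hB : ∀ y, ∑ b, B y b = e) (he : ‖e‖ = 1) :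
    ∑ a, ∑ b, (∑ x, ∑ y, ⟪P x, Q y⟫_ℂ * ⟪A x a, B y b⟫_ℂ) = ⟪∑ x, P x, ∑ y, Q y⟫_ℂ := by
  have hee : ⟪e, e⟫_ℂ = 1 := by
    rw [inner_self_eq_norm_sq_to_K, he]; norm_num
  calc ∑ a, ∑ b, (∑ x, ∑ y, ⟪P x, Q y⟫_ℂ * ⟪A x a, B y b⟫_ℂ)
      = ∑ ab : VK × VK, ∑ xy : VH × VH,
          ⟪P xy.1, Q xy.2⟫_ℂ * ⟪A xy.1 ab.1, B xy.2 ab.2⟫_ℂ := by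
        simp only [Fintype.sum_prod_type]
    _ = ∑ xy : VH × VH, ∑ ab : VK × VK,
          ⟪P xy.1, Q xy.2⟫_ℂ * ⟪A xy.1 ab.1, B xy.2 ab.2⟫_ℂ := Finset.sum_comm
    _ = ∑ x, ∑ y, ⟪P x, Q y⟫_ℂ * (∑ a, ∑ b, ⟪A x a, B y b⟫_ℂ) := by
        simp only [Fintype.sum_prod_type, Finset.mul_sum]
    _ = ∑ x, ∑ y, ⟪P x, Q y⟫_ℂ := by
        refine Finset.sum_congr rfl fun x _ => Finset.sum_congr rfl fun y _ => ?_
        have : ∑ a, ∑ b, ⟪A x a, B y b⟫_ℂ = ⟪e, e⟫_ℂ := by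
          simp only [← inner_sum, ← sum_inner, hA, hB]
        rw [this, hee, mul_one]
    _ = ⟪∑ x, P x, ∑ y, Q y⟫_ℂ := by
        simp only [← inner_sum, ← sum_inner]

set_option maxHeartbeats 1000000 in
/-- Composition of winning synchronous vectorial strategies: if there are winning
vectorial strategies for the homomorphism games from `G` to `H` and from `H` to `K`,
then `r(a,b|v,w) = Σ_{x,y} q(a,b|x,y) p(x,y|v,w)` is a winning vectorial strategy for
the game from `G` to `K`. -/
theorem vect_homomorphism_comp {VG VH VK : Type}
    [Fintype VG] [Fintype VH] [Fintype VK]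
    (G : SimpleGraph VG) (Hg : SimpleGraph VH) (K : SimpleGraph VK)
    (p : VH → VH → VG → VG → ℝ) (q : VK → VK → VH → VH → ℝ)
    (hp : IsVectCorrelation p) (hps : Synchronous p) (hpw : WinningFor G Hg p)
    (hq : IsVectCorrelation q) (hqs : Synchronous q) (hqw : WinningFor Hg K q) :
    IsVectCorrelation (fun a b v w => ∑ x, ∑ y, q a b x y * p x y v w) ∧
    Synchronous (fun a b v w => ∑ x, ∑ y, q a b x y * p x y v w) ∧
    WinningFor G K (fun a b v w => ∑ x, ∑ y, q a b x y * p x y v w) := by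
  classical
  obtain ⟨R1⟩ := hp
  obtain ⟨R2⟩ := hq
  letI := R1.nacg
  letI := R1.ips
  letI := R2.nacg
  letI := R2.ips
  refine ⟨?_, ?_, ?_⟩
  · -- IsVectCorrelation
    set ι := (VG × VK) ⊕ (VG × VK) with hι
    set Z1 : ι → VH → R1.H :=
      Sum.elim (fun va x => R1.X va.1 x) (fun wb x => R1.Y wb.1 x) with hZ1
    set Z2 : ι → VH → R2.H :=
      Sum.elim (fun va x => R2.X x va.2) (fun wb x => R2.Y x wb.2) with hZ2
    set Gm : Matrix ι ι ℂ :=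
      Matrix.of (fun s t => ∑ x, ∑ y, ⟪Z1 s x, Z1 t y⟫_ℂ * ⟪Z2 s x, Z2 t y⟫_ℂ) with hGm
    have hpsd : Gm.PosSemidef := by
      refine Matrix.posSemidef_iff_dotProduct_mulVec.mpr ⟨?_, ?_⟩
      · ext s t
        simp only [Matrix.conjTranspose_apply, hGm, Matrix.of_apply, star_sum, star_mul',
          RCLike.star_def, inner_conj_symm]
        exact Finset.sum_comm
      · intro c
        have h1 : dotProduct (star c) (Gm *ᵥ c)
            = ∑ s, ∑ t, (starRingEnd ℂ) (c s) * c t *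
              (∑ x, ∑ y, ⟪Z1 s x, Z1 t y⟫_ℂ * ⟪Z2 s x, Z2 t y⟫_ℂ) := by
          simp only [dotProduct, Matrix.mulVec, hGm, Matrix.of_apply, Pi.star_apply,
            Finset.mul_sum, Finset.sum_mul, RCLike.star_def, dotProduct]
          refine Finset.sum_congr rfl fun s _ => Finset.sum_congr rfl fun t _ => ?_
          refine Finset.sum_congr rfl fun x _ => Finset.sum_congr rfl fun y _ => by ring
        rw [h1]
        exact quad_nonneg Z1 Z2 c
    obtain ⟨B, hB⟩ := psd_eq_conjTranspose_mul_self' hpsd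
    set ξ : ι → EuclideanSpace ℂ ι := fun s => WithLp.toLp 2 (fun k => B k s) with hξ
    have hxi : ∀ s t, ⟪ξ s, ξ t⟫_ℂ = Gm s t := by
      intro s t
      rw [hB]
      simp only [hξ, PiLp.inner_apply, RCLike.inner_apply, Matrix.mul_apply,
        Matrix.conjTranspose_apply, RCLike.star_def, PiLp.toLp_apply]
      exact Finset.sum_congr rfl fun _ _ => mul_comm _ _
    have hval : ∀ (s t : ι),
        Gm s t = ∑ x, ∑ y, ⟪Z1 s x, Z1 t y⟫_ℂ * ⟪Z2 s x, Z2 t y⟫_ℂ := fun s t => rfl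
    -- the four fundamental "sum equals one" identities
    have master : ∀ v w : VG,
        ⟪∑ a, ξ (Sum.inl (v, a)), ∑ b, ξ (Sum.inl (w, b))⟫_ℂ = 1 ∧
        ⟪∑ a, ξ (Sum.inl (v, a)), ∑ b, ξ (Sum.inr (w, b))⟫_ℂ = 1 ∧
        ⟪∑ a, ξ (Sum.inr (v, a)), ∑ b, ξ (Sum.inl (w, b))⟫_ℂ = 1 ∧
        ⟪∑ a, ξ (Sum.inr (v, a)), ∑ b, ξ (Sum.inr (w, b))⟫_ℂ = 1 := by
      intro v w
      have hVH : Nonempty VH := by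
        by_contra hemp
        have huniv : (Finset.univ : Finset VH) = ∅ :=
          Finset.univ_eq_empty_iff.mpr (not_nonempty_iff.mp hemp)
        have h0 := R1.normOne v
        rw [huniv] at h0
        simp at h0
      obtain ⟨x0⟩ := hVH
      set e : R2.H := ∑ b, R2.Y x0 b with he
      have hA : ∀ x : VH, ∑ a, R2.X x a = e := fun x => R2.sumEq x x0
      have hBB : ∀ y : VH, ∑ b, R2.Y y b = e := fun y => by
        rw [← R2.sumEq x0 y]; exact R2.sumEq x0 x0
      have hnorme : ‖e‖ = 1 := by
        rw [← hA x0]; exact R2.normOne x0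
      set S : R1.H := ∑ x, R1.X v x with hS
      have hSw : ∀ w' : VG, ∑ y, R1.Y w' y = S := fun w' => by
        rw [← R1.sumEq v w']
      have hSv : ∀ v' : VG, ∑ x, R1.X v' x = S := fun v' => by
        rw [hS, R1.sumEq v v, R1.sumEq v' v]
      have hSS : ⟪S, S⟫_ℂ = 1 := by
        rw [inner_self_eq_norm_sq_to_K, hS, R1.normOne v]; norm_num
      have key : ∀ (P Q : VH → R1.H) (A' B' : VH → VK → R2.H),
          (∀ x, ∑ a, A' x a = e) → (∀ y, ∑ b, B' y b = e) →
          (∑ x, P x = S) → (∑ y, Q y = S) →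
          ∑ a, ∑ b, (∑ x, ∑ y, ⟪P x, Q y⟫_ℂ * ⟪A' x a, B' y b⟫_ℂ) = 1 := by
        intro P Q A' B' hA' hB' hP hQ
        rw [sum_sum_eq P Q A' B' e hA' hB' hnorme, hP, hQ, hSS]
      have expand : ∀ (f g : VK → ι),
          ⟪∑ a, ξ (f a), ∑ b, ξ (g b)⟫_ℂ
            = ∑ a, ∑ b, (∑ x, ∑ y,
                ⟪Z1 (f a) x, Z1 (g b) y⟫_ℂ * ⟪Z2 (f a) x, Z2 (g b) y⟫_ℂ) := by
        intro f g
        rw [sum_inner]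
        refine Finset.sum_congr rfl fun a _ => ?_
        rw [inner_sum]
        refine Finset.sum_congr rfl fun b _ => ?_
        rw [hxi, hval]
      refine ⟨?_, ?_, ?_, ?_⟩
      · rw [expand (fun a => Sum.inl (v, a)) (fun b => Sum.inl (w, b))]
        simp only [hZ1, hZ2, Sum.elim_inl]
        exact key (R1.X v) (R1.X w) R2.X R2.X hA hA (hSv v) (hSv w)
      · rw [expand (fun a => Sum.inl (v, a)) (fun b => Sum.inr (w, b))]
        simp only [hZ1, hZ2, Sum.elim_inl, Sum.elim_inr]
        exact key (R1.X v) (R1.Y w) R2.X R2.Y hA hBB (hSv v) (hSw w)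
      · rw [expand (fun a => Sum.inr (v, a)) (fun b => Sum.inl (w, b))]
        simp only [hZ1, hZ2, Sum.elim_inl, Sum.elim_inr]
        exact key (R1.Y v) (R1.X w) R2.Y R2.X hBB hA (hSw v) (hSv w)
      · rw [expand (fun a => Sum.inr (v, a)) (fun b => Sum.inr (w, b))]
        simp only [hZ1, hZ2, Sum.elim_inr]
        exact key (R1.Y v) (R1.Y w) R2.Y R2.Y hBB hBB (hSw v) (hSw w)
    refine ⟨⟨EuclideanSpace ℂ ι,
      (fun v a => ξ (Sum.inl (v, a))), (fun w b => ξ (Sum.inr (w, b))),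
      ?_, ?_, ?_, ?_, ?_, ?_⟩⟩
    · -- orthX
      intro v a a' haa'
      rw [hxi, hval]
      refine Finset.sum_eq_zero fun x _ => Finset.sum_eq_zero fun y _ => ?_
      by_cases hxy : x = y
      · subst hxy
        simp only [hZ2, Sum.elim_inl]
        rw [R2.orthX x a a' haa', mul_zero]
      · simp only [hZ1, Sum.elim_inl]
        rw [R1.orthX v x y hxy, zero_mul]
    · -- orthY
      intro w b b' hbb'
      rw [hxi, hval]
      refine Finset.sum_eq_zero fun x _ => Finset.sum_eq_zero fun y _ => ?_
      by_cases hxy : x = y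
      · subst hxy
        simp only [hZ2, Sum.elim_inr]
        rw [R2.orthY x b b' hbb', mul_zero]
      · simp only [hZ1, Sum.elim_inr]
        rw [R1.orthY w x y hxy, zero_mul]
    · -- sumEq
      intro v w
      obtain ⟨hXX, hXY, hYX, hYY⟩ := master v w
      have hYX' := (master w v).2.2.1
      have hYY' := (master w w).2.2.2
      have hzero : ⟪(∑ a, ξ (Sum.inl (v, a))) - (∑ b, ξ (Sum.inr (w, b))),
          (∑ a, ξ (Sum.inl (v, a))) - (∑ b, ξ (Sum.inr (w, b)))⟫_ℂ = 0 := by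
        rw [inner_sub_left, inner_sub_right, inner_sub_right, (master v v).1, hXY, hYX',
          (master w w).2.2.2]
        ring
      exact sub_eq_zero.mp (inner_self_eq_zero.mp hzero)
    · -- normOne
      intro v
      have hXX := (master v v).1
      rw [inner_self_eq_norm_sq_to_K] at hXX
      have h2 : ‖∑ a, ξ (Sum.inl (v, a))‖ ^ 2 = 1 := by
        have h3 : ((‖∑ a, ξ (Sum.inl (v, a))‖ ^ 2 : ℝ) : ℂ) = 1 := by
          rw [← hXX]; push_cast; rfl
        exact_mod_cast h3
      have h4 := Real.sqrt_sq (norm_nonneg (∑ a, ξ (Sum.inl (v, a))))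
      rw [h2] at h4
      show ‖∑ a, ξ (Sum.inl (v, a))‖ = 1
      rw [← h4, Real.sqrt_one]
    · -- nonneg
      intro v w a b
      exact Finset.sum_nonneg fun x _ => Finset.sum_nonneg fun y _ =>
        mul_nonneg (R2.nonneg x y a b) (R1.nonneg v w x y)
    · -- eq
      intro a b v w
      rw [hxi, hval]
      push_cast
      refine Finset.sum_congr rfl fun x _ => Finset.sum_congr rfl fun y _ => ?_
      simp only [hZ1, hZ2, Sum.elim_inl, Sum.elim_inr]
      rw [← R1.eq x y v w, ← R2.eq a b x y]
      ring
  · -- Synchronous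
    intro v a b hab
    refine Finset.sum_eq_zero fun x _ => Finset.sum_eq_zero fun y _ => ?_
    by_cases hxy : x = y
    · subst hxy
      rw [hqs x a b hab, zero_mul]
    · rw [hps v x y hxy, mul_zero]
  · -- WinningFor
    intro v w a b hvw hab
    refine Finset.sum_eq_zero fun x _ => Finset.sum_eq_zero fun y _ => ?_
    by_cases hxy : Hg.Adj x y
    · rw [hqw x y a b hxy hab, zero_mul]
    · rw [hpw v w x y hvw hxy, mul_zero]
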